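/- Jacobi triple product: for 0 < |q| < 1 and z ∈ ℂ \ {0}, Σ_{k∈ℤ} q^{k²} z^k = (q²; q²)_∞ (-zq; q²)_∞ (-z^{-1}q; q²)_∞, where (a;q)_∞ = ∏_{k=0}^∞ (1 - a q^k). -/

import Mathlib

open Finset Filter Topology Complex

noncomputable section JTP

/-- partial q-Pochhammer product `∏_{j=1}^{n} (1 - w^j)` -/
def qP (w : ℂ) (n : ℕ) : ℂ := ∏ j ∈ Finset.range n, (1 - w ^ (j + 1))

/-- Gaussian binomial coefficient as ratio -/
def qG (w : ℂ) (N k : ℕ) : ℂ :=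
  if k ≤ N then qP w N / (qP w k * qP w (N - k)) else 0

lemma one_sub_pow_ne_zero {w : ℂ} (hw : ‖w‖ < 1) (j : ℕ) : (1 : ℂ) - w ^ (j + 1) ≠ 0 := by
  intro h
  have h1 : (1:ℂ) = w ^ (j+1) := by linear_combination h
  have : ‖w ^ (j+1)‖ < 1 := by
    rw [norm_pow]
    exact pow_lt_one₀ (norm_nonneg w) hw (Nat.succ_ne_zero j)
  rw [← h1] at this; simp at this

lemma qP_ne_zero {w : ℂ} (hw : ‖w‖ < 1) (n : ℕ) : qP w n ≠ 0 :=
  Finset.prod_ne_zero_iff.2 fun j _ => one_sub_pow_ne_zero hw j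

lemma qP_succ (w : ℂ) (n : ℕ) : qP w (n + 1) = qP w n * (1 - w ^ (n + 1)) :=
  Finset.prod_range_succ _ _

lemma qP_zero (w : ℂ) : qP w 0 = 1 := by simp [qP]

lemma qG_pascal {w : ℂ} (hw : ‖w‖ < 1) (N k : ℕ) :
    qG w (N + 1) (k + 1) = qG w N (k + 1) + w ^ (N - k) * qG w N k := by
  rcases lt_trichotomy k N with h | rfl | h
  · have h1 : k + 1 ≤ N := h
    simp only [qG, if_pos (by omega : k + 1 ≤ N + 1), if_pos h1, if_pos h.le]
    have e1 : N + 1 - (k + 1) = N - k := by omega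
    have e2 : N - (k + 1) = (N - k) - 1 := by omega
    have e3 : N - k = ((N - k) - 1) + 1 := by omega
    rw [e1, e2]
    have hP1 : qP w (N + 1) = qP w N * (1 - w ^ (N - k) * w ^ (k + 1)) := by
      rw [qP_succ, show N + 1 = (N - k) + (k + 1) from by omega, pow_add]
    have hP2 : qP w (N - k) = qP w ((N - k) - 1) * (1 - w ^ (N - k)) := by
      conv_lhs => rw [e3, qP_succ, ← e3]
    have hP3 : qP w (k + 1) = qP w k * (1 - w ^ (k + 1)) := qP_succ w k
    rw [hP1, hP2, hP3]
    have n1 := qP_ne_zero hw N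
    have n2 := qP_ne_zero hw k
    have n3 := qP_ne_zero hw ((N - k) - 1)
    have n4 := one_sub_pow_ne_zero hw k
    have n5 : (1:ℂ) - w ^ (N - k) ≠ 0 := by
      conv_lhs => rw [e3]
      exact one_sub_pow_ne_zero hw _
    field_simp
    ring
  · simp only [qG, if_pos (le_refl (k+1)), if_neg (by omega : ¬ k + 1 ≤ k), if_pos (le_refl k),
      Nat.sub_self, qP_zero, mul_one, pow_zero, zero_add, one_mul]
    rw [div_self (qP_ne_zero hw (k+1)), div_self (qP_ne_zero hw k)]
  · simp [qG, if_neg (by omega : ¬ k + 1 ≤ N + 1), if_neg (by omega : ¬ k + 1 ≤ N),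
      if_neg (by omega : ¬ k ≤ N)]
    intro h'; omega

lemma qG_zero {w : ℂ} (hw : ‖w‖ < 1) (N : ℕ) : qG w N 0 = 1 := by
  rw [qG, if_pos (Nat.zero_le N), qP_zero, one_mul, Nat.sub_zero,
    div_self (qP_ne_zero hw N)]

lemma qG_top (w : ℂ) {N k : ℕ} (h : N < k) : qG w N k = 0 := by
  simp [qG, Nat.not_le.2 h]

/-- q-binomial theorem -/
lemma qbinom {w : ℂ} (hw : ‖w‖ < 1) (x : ℂ) (N : ℕ) :
    ∏ j ∈ Finset.range N, (1 + x * w ^ j) =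
      ∑ k ∈ Finset.range (N + 1), w ^ (∑ i ∈ Finset.range k, i) * qG w N k * x ^ k := by
  induction N with
  | zero => simp [qG_zero hw]
  | succ N ih =>
    have hstep : ∀ k ∈ Finset.range (N+1),
        w ^ (∑ i ∈ Finset.range (k+1), i) * qG w (N+1) (k+1) * x ^ (k+1)
        = w ^ (∑ i ∈ Finset.range (k+1), i) * qG w N (k+1) * x ^ (k+1)
          + (w ^ (∑ i ∈ Finset.range k, i) * qG w N k * x ^ k) * (x * w ^ N) := by
      intro k hk
      rw [Finset.mem_range] at hk
      rw [qG_pascal hw N k]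
      have he : (∑ i ∈ Finset.range (k+1), i) + (N - k) = (∑ i ∈ Finset.range k, i) + N := by
        rw [Finset.sum_range_succ]; omega
      have hww : w ^ (∑ i ∈ Finset.range (k+1), i) * w ^ (N - k)
          = w ^ (∑ i ∈ Finset.range k, i) * w ^ N := by
        rw [← pow_add, ← pow_add, he]
      linear_combination (qG w N k * x ^ (k+1)) * hww
    calc ∏ j ∈ Finset.range (N+1), (1 + x * w ^ j)
        = (∑ k ∈ Finset.range (N+1), w ^ (∑ i ∈ Finset.range k, i) * qG w N k * x ^ k)
            * (1 + x * w ^ N) := by rw [Finset.prod_range_succ, ih]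
      _ = ((∑ k ∈ Finset.range N, w ^ (∑ i ∈ Finset.range (k+1), i) * qG w N (k+1) * x ^ (k+1))
            + w ^ (0:ℕ) * qG w N 0 * x ^ (0:ℕ))
          + (∑ k ∈ Finset.range (N+1),
              (w ^ (∑ i ∈ Finset.range k, i) * qG w N k * x ^ k) * (x * w ^ N)) := by
          rw [mul_add, mul_one, Finset.sum_mul,
            Finset.sum_range_succ' (fun k => w ^ (∑ i ∈ Finset.range k, i) * qG w N k * x ^ k) N]
          simp
      _ = ((∑ k ∈ Finset.range (N+1), w ^ (∑ i ∈ Finset.range (k+1), i) * qG w N (k+1) * x ^ (k+1))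
            + w ^ (0:ℕ) * qG w (N+1) 0 * x ^ (0:ℕ))
          + (∑ k ∈ Finset.range (N+1),
              (w ^ (∑ i ∈ Finset.range k, i) * qG w N k * x ^ k) * (x * w ^ N)) := by
          rw [Finset.sum_range_succ
            (fun k => w ^ (∑ i ∈ Finset.range (k+1), i) * qG w N (k+1) * x ^ (k+1)) N,
            qG_top w (by omega : N < N + 1), qG_zero hw, qG_zero hw]
          ring
      _ = (∑ k ∈ Finset.range (N+1),
            (w ^ (∑ i ∈ Finset.range (k+1), i) * qG w N (k+1) * x ^ (k+1)
              + (w ^ (∑ i ∈ Finset.range k, i) * qG w N k * x ^ k) * (x * w ^ N)))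
          + w ^ (0:ℕ) * qG w (N+1) 0 * x ^ (0:ℕ) := by
          rw [Finset.sum_add_distrib]; ring
      _ = (∑ k ∈ Finset.range (N+1),
            w ^ (∑ i ∈ Finset.range (k+1), i) * qG w (N+1) (k+1) * x ^ (k+1))
          + w ^ (0:ℕ) * qG w (N+1) 0 * x ^ (0:ℕ) := by
          rw [Finset.sum_congr rfl (fun k hk => (hstep k hk).symm)]
      _ = ∑ k ∈ Finset.range (N+2), w ^ (∑ i ∈ Finset.range k, i) * qG w (N+1) k * x ^ k := by
          rw [Finset.sum_range_succ'
            (fun k => w ^ (∑ i ∈ Finset.range k, i) * qG w (N+1) k * x ^ k) (N+1)]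
          simp

lemma gauss_int (k : ℕ) : ((∑ i ∈ Finset.range k, i : ℕ) : ℤ) * 2 = (k:ℤ)^2 - k := by
  have h := Finset.sum_range_id_mul_two k
  have h2 : ((∑ i ∈ Finset.range k, i : ℕ) : ℤ) * 2 = ((k * (k-1) : ℕ) : ℤ) := by
    exact_mod_cast congrArg (Nat.cast : ℕ → ℤ) h
  rw [h2]
  cases k with
  | zero => simp
  | succ s => push_cast [Nat.succ_sub_one]; ring

/-- homogeneous q-binomial theorem -/
lemma qbinom_hom {w : ℂ} (hw : ‖w‖ < 1) (x y : ℂ) (hy : y ≠ 0) (N : ℕ) :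
    ∏ j ∈ Finset.range N, (y + x * w ^ j) =
      ∑ k ∈ Finset.range (N + 1),
        w ^ (∑ i ∈ Finset.range k, i) * qG w N k * x ^ k * y ^ (N - k) := by
  have h1 : ∀ j ∈ Finset.range N, y + x * w ^ j = y * (1 + (x / y) * w ^ j) := by
    intro j _; field_simp
  rw [Finset.prod_congr rfl h1, Finset.prod_mul_distrib, Finset.prod_const, Finset.card_range,
    qbinom hw (x / y) N, Finset.mul_sum]
  refine Finset.sum_congr rfl fun k hk => ?_
  rw [Finset.mem_range] at hk
  have hkN : k ≤ N := by omega
  have hyk : y ^ N = y ^ (N - k) * y ^ k := by rw [← pow_add]; congr 1; omega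
  rw [div_pow, hyk]
  field_simp

/-- finite Jacobi triple product -/
lemma finiteJTP {q z : ℂ} (hq0 : q ≠ 0) (hq : ‖q‖ < 1) (hz : z ≠ 0) (n : ℕ) :
    (∏ j ∈ Finset.range n, (1 + z * q * (q ^ 2) ^ j)) *
      (∏ j ∈ Finset.range n, (1 + z⁻¹ * q * (q ^ 2) ^ j))
    = ∑ m ∈ Finset.Icc (-(n:ℤ)) (n:ℤ),
        qG (q ^ 2) (2 * n) (m + n).toNat * q ^ (m ^ 2) * z ^ m := by
  have hq2 : (q:ℂ) ^ 2 ≠ 0 := pow_ne_zero _ hq0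
  have hw : ‖(q:ℂ) ^ 2‖ < 1 := by
    rw [norm_pow]
    exact pow_lt_one₀ (norm_nonneg q) hq (by norm_num)
  -- the homogeneous LHS, split and factored
  have hL : ∏ j ∈ Finset.range (2 * n), ((q ^ 2) ^ n + (z * q) * (q ^ 2) ^ j)
      = ((q ^ 2) ^ (n * n) * (q ^ 2) ^ (∑ i ∈ Finset.range n, i) * (z * q) ^ n) *
        ((∏ j ∈ Finset.range n, (1 + z * q * (q ^ 2) ^ j)) *
         (∏ j ∈ Finset.range n, (1 + z⁻¹ * q * (q ^ 2) ^ j))) := by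
    rw [two_mul, Finset.prod_range_add]
    have h2 : ∀ j ∈ Finset.range n,
        ((q ^ 2) ^ n + (z * q) * (q ^ 2) ^ (n + j)) = (q ^ 2) ^ n * (1 + z * q * (q ^ 2) ^ j) := by
      intro j _; rw [pow_add]; ring
    have h1 : ∀ j ∈ Finset.range n,
        ((q ^ 2) ^ n + (z * q) * (q ^ 2) ^ j)
          = ((q ^ 2) ^ j * (z * q)) * (1 + z⁻¹ * q * (q ^ 2) ^ (n - 1 - j)) := by
      intro j hj
      rw [Finset.mem_range] at hj
      have hp : (q ^ 2) ^ j * ((q ^ 2) ^ (n - 1 - j) * q ^ 2) = (q ^ 2) ^ n := by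
        rw [← pow_succ, ← pow_add]
        congr 1
        omega
      have hzz : z * z⁻¹ = 1 := mul_inv_cancel₀ hz
      linear_combination (-(q^2 * (q^2)^j * (q^2)^(n-1-j))) * hzz - hp
    rw [Finset.prod_congr rfl h1, Finset.prod_congr rfl h2]
    simp only [Finset.prod_mul_distrib, Finset.prod_const, Finset.card_range]
    rw [Finset.prod_pow_eq_pow_sum, Finset.prod_range_reflect
      (fun j => 1 + z⁻¹ * q * (q ^ 2) ^ j) n, ← pow_mul]
    ring
  have hHom := qbinom_hom hw (z * q) ((q ^ 2) ^ n) (pow_ne_zero _ hq2) (2 * n)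
  -- reindex the sum over range (2n+1) to Icc (-n) n and pull out the prefactor
  have hR : ∑ k ∈ Finset.range (2 * n + 1),
        (q ^ 2) ^ (∑ i ∈ Finset.range k, i) * qG (q ^ 2) (2 * n) k * (z * q) ^ k *
          ((q ^ 2) ^ n) ^ (2 * n - k)
      = ∑ m ∈ Finset.Icc (-(n:ℤ)) (n:ℤ),
          ((q ^ 2) ^ (n * n) * (q ^ 2) ^ (∑ i ∈ Finset.range n, i) * (z * q) ^ n) *
          (qG (q ^ 2) (2 * n) (m + n).toNat * q ^ (m ^ 2) * z ^ m) := by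
    refine Finset.sum_nbij' (fun k => (k : ℤ) - n) (fun m => (m + n).toNat) ?_ ?_ ?_ ?_ ?_
    · intro k hk; rw [Finset.mem_range] at hk; rw [Finset.mem_Icc]; omega
    · intro m hm; rw [Finset.mem_Icc] at hm; rw [Finset.mem_range]; omega
    · intro k hk; rw [Finset.mem_range] at hk; omega
    · intro m hm; rw [Finset.mem_Icc] at hm; omega
    · intro k hk
      rw [Finset.mem_range] at hk
      have hk2n : k ≤ 2 * n := by omega
      have htn : (((k : ℤ) - n + n).toNat) = k := by omega
      rw [htn]
      have hEk := gauss_int k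
      have hEn := gauss_int n
      -- z-part
      have hzpart : z ^ ((k:ℤ) - n) * z ^ (n:ℕ) = z ^ (k:ℕ) := by
        rw [← zpow_natCast z n, ← zpow_natCast z k, ← zpow_add₀ hz]
        congr 1
        omega
      -- q-part
      have hqpart : q ^ (((k:ℤ) - n) ^ 2) *
            q ^ ((2 * (n * n + (∑ i ∈ Finset.range n, i)) + n : ℕ))
          = q ^ ((2 * (∑ i ∈ Finset.range k, i) + k + 2 * (n * (2 * n - k)) : ℕ)) := by
        rw [← zpow_natCast q (2 * (n * n + (∑ i ∈ Finset.range n, i)) + n),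
          ← zpow_natCast q (2 * (∑ i ∈ Finset.range k, i) + k + 2 * (n * (2 * n - k))),
          ← zpow_add₀ hq0]
        congr 1
        push_cast [Nat.cast_sub hk2n] at hEk hEn ⊢
        linear_combination hEn - hEk
      -- combine
      linear_combination (-(qG (q ^ 2) (2 * n) k * (z ^ ((k:ℤ) - n) * z ^ (n:ℕ)))) * hqpart
        + (-(qG (q ^ 2) (2 * n) k *
            q ^ ((2 * (∑ i ∈ Finset.range k, i) + k + 2 * (n * (2 * n - k)) : ℕ)))) * hzpart
  rw [hL] at hHom
  rw [hR] at hHom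
  rw [← Finset.mul_sum] at hHom
  have hpne : ((q ^ 2) ^ (n * n) * (q ^ 2) ^ (∑ i ∈ Finset.range n, i) * (z * q) ^ n : ℂ) ≠ 0 := by
    apply mul_ne_zero (mul_ne_zero (pow_ne_zero _ hq2) (pow_ne_zero _ hq2))
    exact pow_ne_zero _ (mul_ne_zero hz hq0)
  exact mul_left_cancel₀ hpne hHom

/-! ### Analytic lemmas -/

section Analysis

variable {w : ℂ} (hw1 : ‖w‖ < 1)
include hw1

lemma rfac_pos (j : ℕ) : 0 < 1 - ‖w‖ ^ (j + 1) := by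
  have : ‖w‖ ^ (j + 1) < 1 := pow_lt_one₀ (norm_nonneg w) hw1 (Nat.succ_ne_zero j)
  linarith

lemma rgeom_summable : Summable (fun j : ℕ => ‖w‖ ^ (j + 1)) := by
  have h := summable_geometric_of_lt_one (norm_nonneg w) hw1
  simpa [pow_succ, mul_comm] using h.mul_left ‖w‖

lemma rlog_summable : Summable (fun j : ℕ => Real.log (1 - ‖w‖ ^ (j + 1))) := by
  apply Summable.of_norm_bounded (g := fun j => (1 - ‖w‖)⁻¹ * ‖w‖ ^ (j + 1))
    ((rgeom_summable hw1).mul_left _)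
  intro j
  have hp := rfac_pos hw1 j
  have hx1 : ‖w‖ ^ (j + 1) < 1 := by linarith
  have hx0 : 0 ≤ ‖w‖ ^ (j + 1) := pow_nonneg (norm_nonneg w) _
  have hlog_le : Real.log (1 - ‖w‖ ^ (j + 1)) ≤ 0 :=
    Real.log_nonpos (by linarith) (by linarith)
  rw [Real.norm_of_nonpos hlog_le]
  have hkey : Real.log (1 - ‖w‖ ^ (j + 1))⁻¹ ≤ (1 - ‖w‖ ^ (j + 1))⁻¹ - 1 :=
    Real.log_le_sub_one_of_pos (by positivity)
  rw [Real.log_inv] at hkey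
  have hxw : ‖w‖ ^ (j + 1) ≤ ‖w‖ := by
    have := pow_le_pow_of_le_one (norm_nonneg w) hw1.le (by omega : 1 ≤ j + 1)
    simpa using this
  have hu : (1 - ‖w‖ ^ (j + 1))⁻¹ ≤ (1 - ‖w‖)⁻¹ := by
    apply inv_anti₀ (by linarith) (by linarith)
  have hux : (1 - ‖w‖ ^ (j + 1))⁻¹ - 1 = ‖w‖ ^ (j + 1) * (1 - ‖w‖ ^ (j + 1))⁻¹ := by
    linear_combination (mul_inv_cancel₀ hp.ne' : (1 - ‖w‖ ^ (j + 1)) * (1 - ‖w‖ ^ (j + 1))⁻¹ = 1)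
  have hmm : ‖w‖ ^ (j + 1) * (1 - ‖w‖ ^ (j + 1))⁻¹ ≤ ‖w‖ ^ (j + 1) * (1 - ‖w‖)⁻¹ :=
    mul_le_mul_of_nonneg_left hu hx0
  linarith [hmm, hux, hkey]

/-- lower bound for the real partial products -/
lemma rP_bound : ∃ δ : ℝ, 0 < δ ∧ ∀ n : ℕ, δ ≤ ∏ j ∈ Finset.range n, (1 - ‖w‖ ^ (j + 1)) := by
  have hpos : ∀ (_ : Unit) (j : ℕ), 0 < 1 - ‖w‖ ^ (j + 1) := fun _ j => rfac_pos hw1 j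
  have hsum : ∀ (_ : Unit), Summable fun j : ℕ => Real.log (1 - ‖w‖ ^ (j + 1)) :=
    fun _ => rlog_summable hw1
  have hmult : Multipliable fun j : ℕ => 1 - ‖w‖ ^ (j + 1) :=
    Real.multipliable_of_summable_log (hpos ()) (hsum ())
  set δ := ∏' j : ℕ, (1 - ‖w‖ ^ (j + 1)) with hδ
  have hexp : Real.exp (∑' n : ℕ, Real.log (1 - ‖w‖ ^ (n + 1))) =
      ∏' n : ℕ, (1 - ‖w‖ ^ (n + 1)) :=
    Real.rexp_tsum_eq_tprod (hpos ()) (hsum ())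
  refine ⟨δ, ?_, ?_⟩
  · rw [hδ, ← hexp]; exact Real.exp_pos _
  · intro n
    apply le_of_tendsto hmult.hasProd.tendsto_prod_nat
    filter_upwards [Filter.eventually_ge_atTop n] with m hm
    have : ∏ j ∈ Finset.range m, (1 - ‖w‖ ^ (j + 1)) =
        (∏ j ∈ Finset.range n, (1 - ‖w‖ ^ (j + 1))) *
          ∏ j ∈ Finset.Ico n m, (1 - ‖w‖ ^ (j + 1)) := by
      rw [Finset.prod_range_mul_prod_Ico _ hm]
    rw [this]
    have h1 : ∏ j ∈ Finset.Ico n m, (1 - ‖w‖ ^ (j + 1)) ≤ 1 :=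
      Finset.prod_le_one (fun j _ => (rfac_pos hw1 j).le) (fun j _ => by
        have : 0 ≤ ‖w‖ ^ (j + 1) := by positivity
        linarith)
    have h2 : 0 < ∏ j ∈ Finset.range n, (1 - ‖w‖ ^ (j + 1)) :=
      Finset.prod_pos fun j _ => rfac_pos hw1 j
    nlinarith

/-- upper bound for the partial products -/
lemma qP_norm_le (n : ℕ) : ‖qP w n‖ ≤ Real.exp (∑' j : ℕ, ‖w‖ ^ (j + 1)) := by
  rw [qP, norm_prod]
  calc ∏ j ∈ Finset.range n, ‖1 - w ^ (j + 1)‖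
      ≤ ∏ j ∈ Finset.range n, Real.exp (‖w‖ ^ (j + 1)) := by
        apply Finset.prod_le_prod (fun j _ => norm_nonneg _)
        intro j _
        calc ‖1 - w ^ (j + 1)‖ ≤ ‖(1:ℂ)‖ + ‖w ^ (j + 1)‖ := norm_sub_le _ _
          _ = 1 + ‖w‖ ^ (j + 1) := by rw [norm_one, norm_pow]
          _ ≤ Real.exp (‖w‖ ^ (j + 1)) := by
              have := Real.add_one_le_exp (‖w‖ ^ (j + 1))
              linarith
    _ = Real.exp (∑ j ∈ Finset.range n, ‖w‖ ^ (j + 1)) := (Real.exp_sum _ _).symm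
    _ ≤ Real.exp (∑' j : ℕ, ‖w‖ ^ (j + 1)) := by
        apply Real.exp_le_exp.2
        exact Summable.sum_le_tsum _ (fun j _ => by positivity) (rgeom_summable hw1)

lemma qP_norm_ge {δ : ℝ} (hδ : ∀ n : ℕ, δ ≤ ∏ j ∈ Finset.range n, (1 - ‖w‖ ^ (j + 1)))
    (n : ℕ) : δ ≤ ‖qP w n‖ := by
  refine le_trans (hδ n) ?_
  rw [qP, norm_prod]
  apply Finset.prod_le_prod (fun j _ => (rfac_pos hw1 j).le)
  intro j _
  calc 1 - ‖w‖ ^ (j + 1) = ‖(1:ℂ)‖ - ‖w ^ (j + 1)‖ := by rw [norm_one, norm_pow]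
    _ ≤ ‖1 - w ^ (j + 1)‖ := norm_sub_norm_le _ _

omit hw1 in
lemma qG_norm_le {δ B : ℝ} (hδ0 : 0 < δ) (hδ : ∀ n : ℕ, δ ≤ ‖qP w n‖)
    (hB : ∀ n : ℕ, ‖qP w n‖ ≤ B) (N k : ℕ) : ‖qG w N k‖ ≤ B / (δ * δ) := by
  have hB0 : 0 ≤ B := le_trans (le_trans hδ0.le (hδ 0)) (hB 0)
  rw [qG]
  split_ifs with h
  · rw [norm_div, norm_mul]
    apply div_le_div₀ hB0 (hB N) (by positivity)
    have h1 := hδ k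
    have h2 := hδ (N - k)
    have h3 : (0:ℝ) ≤ ‖qP w k‖ := norm_nonneg _
    nlinarith
  · rw [norm_zero]; positivity

/-- summability of complex logs of `1 + c * w^k` -/
lemma clog_summable {c : ℂ} (hne : ∀ k : ℕ, (1:ℂ) + c * w ^ k ≠ 0) :
    Summable fun k : ℕ => Complex.log (1 + c * w ^ k) := by
  apply Summable.of_norm_bounded_eventually_nat (g := fun k => 3 / 2 * (‖c‖ * ‖w‖ ^ k))
    (((summable_geometric_of_lt_one (norm_nonneg w) hw1).mul_left ‖c‖).mul_left _)
  have h0 : Tendsto (fun k : ℕ => ‖c‖ * ‖w‖ ^ k) atTop (𝓝 0) := by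
    simpa using (tendsto_pow_atTop_nhds_zero_of_lt_one (norm_nonneg w) hw1).const_mul ‖c‖
  filter_upwards [h0.eventually_le_const (by norm_num : (0:ℝ) < 1/2)] with k hk
  have hcw : ‖c * w ^ k‖ ≤ 1 / 2 := by rw [norm_mul, norm_pow]; exact hk
  calc ‖Complex.log (1 + c * w ^ k)‖ ≤ 3 / 2 * ‖c * w ^ k‖ :=
        Complex.norm_log_one_add_half_le_self hcw
    _ = 3 / 2 * (‖c‖ * ‖w‖ ^ k) := by rw [norm_mul, norm_pow]

omit hw1 in
lemma hasProd_zero_of_factor_zero {f : ℕ → ℂ} {i : ℕ} (h : f i = 0) : HasProd f 0 := by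
  have he : (fun _ : Finset ℕ => (0:ℂ)) =ᶠ[atTop] fun s => ∏ j ∈ s, f j := by
    filter_upwards [Filter.eventually_ge_atTop ({i} : Finset ℕ)] with s hs
    exact (Finset.prod_eq_zero (hs (Finset.mem_singleton_self i)) h).symm
  exact (tendsto_const_nhds.congr' he : _)

lemma multipliable_one_add (c : ℂ) : Multipliable fun k : ℕ => (1:ℂ) + c * w ^ k := by
  by_cases h : ∀ k : ℕ, (1:ℂ) + c * w ^ k ≠ 0
  · exact Complex.multipliable_of_summable_log (clog_summable hw1 h)
  · push_neg at h
    obtain ⟨i, hi⟩ := h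
    exact ⟨0, hasProd_zero_of_factor_zero hi⟩

lemma tendsto_prod_one_add (c : ℂ) :
    Tendsto (fun n => ∏ j ∈ Finset.range n, ((1:ℂ) + c * w ^ j)) atTop
      (𝓝 (∏' k : ℕ, ((1:ℂ) + c * w ^ k))) :=
  (multipliable_one_add hw1 c).hasProd.tendsto_prod_nat

lemma multipliable_qP : Multipliable fun k : ℕ => (1:ℂ) - w ^ (k + 1) := by
  have h := multipliable_one_add hw1 (-w)
  refine h.congr fun k => ?_
  rw [pow_succ]
  ring

lemma tendsto_qP :
    Tendsto (fun n => qP w n) atTop (𝓝 (∏' k : ℕ, ((1:ℂ) - w ^ (k + 1)))) :=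
  (multipliable_qP hw1).hasProd.tendsto_prod_nat

omit hw1 in
/-- summability of the dominating sequence -/
lemma summable_bound_nat {a M : ℝ} (ha0 : 0 ≤ a) (ha : a < 1) (hM : 0 ≤ M) :
    Summable fun k : ℕ => a ^ (k ^ 2) * M ^ k := by
  apply Summable.of_norm_bounded_eventually_nat (g := fun k => (1/2) ^ k)
    (summable_geometric_of_lt_one (by norm_num) (by norm_num))
  have h0 : Tendsto (fun k : ℕ => a ^ k * M) atTop (𝓝 0) := by
    simpa using ((tendsto_pow_atTop_nhds_zero_of_lt_one ha0 ha).mul_const M)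
  filter_upwards [h0.eventually_le_const (by norm_num : (0:ℝ) < 1/2)] with k hk
  have key : a ^ (k ^ 2) * M ^ k = (a ^ k * M) ^ k := by
    rw [mul_pow, ← pow_mul, pow_two]
  rw [Real.norm_of_nonneg (by positivity), key]
  calc (a ^ k * M) ^ k ≤ (1/2) ^ k :=
    pow_le_pow_left₀ (by positivity) hk k

omit hw1 in
lemma summable_bound_int {a M K : ℝ} (ha0 : 0 ≤ a) (ha : a < 1) (hM : 0 ≤ M) :
    Summable fun m : ℤ => K * (a ^ (m.natAbs ^ 2) * M ^ m.natAbs) := by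
  apply Summable.mul_left
  apply Summable.of_nat_of_neg
  · simpa using summable_bound_nat ha0 ha hM
  · simpa using summable_bound_nat ha0 ha hM

end Analysis
end JTP

/-- Jacobi triple product: for `0 < |q| < 1` and `z ≠ 0`,
`Σ_{k∈ℤ} q^{k²} z^k = (q²;q²)_∞ (-zq;q²)_∞ (-z⁻¹q;q²)_∞`, with
`(a;q)_∞ = ∏_{k=0}^∞ (1 - a q^k)`. -/
theorem stmt_12 (q z : ℂ) (hq0 : q ≠ 0) (hq : ‖q‖ < 1) (hz : z ≠ 0) :
    (∑' k : ℤ, q ^ (k ^ 2) * z ^ k) =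
      (∏' k : ℕ, (1 - q ^ 2 * (q ^ 2) ^ k)) *
      (∏' k : ℕ, (1 + z * q * (q ^ 2) ^ k)) *
      (∏' k : ℕ, (1 + z⁻¹ * q * (q ^ 2) ^ k)) := by
  have hqn : ‖q‖ < 1 := hq
  set w := q ^ 2 with hwdef
  have hw0 : w ≠ 0 := pow_ne_zero _ hq0
  have hw1 : ‖w‖ < 1 := by
    rw [hwdef, norm_pow]
    exact pow_lt_one₀ (norm_nonneg q) hqn two_ne_zero
  obtain ⟨δ, hδ0, hδle⟩ := rP_bound hw1
  set B := Real.exp (∑' j : ℕ, ‖w‖ ^ (j + 1)) with hBdef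
  have hB0 : 0 < B := Real.exp_pos _
  have hPge : ∀ n : ℕ, δ ≤ ‖qP w n‖ := fun n => qP_norm_ge hw1 hδle n
  have hPle : ∀ n : ℕ, ‖qP w n‖ ≤ B := fun n => qP_norm_le hw1 n
  have hGb := qG_norm_le hδ0 hPge hPle
  set P : ℂ := ∏' k : ℕ, ((1:ℂ) - w ^ (k + 1)) with hPdef
  have hPlim : Tendsto (fun n => qP w n) atTop (𝓝 P) := tendsto_qP hw1
  have hPnorm : δ ≤ ‖P‖ := ge_of_tendsto hPlim.norm (Filter.Eventually.of_forall hPge)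
  have hPne : P ≠ 0 := by
    intro h
    rw [h, norm_zero] at hPnorm
    linarith
  have hA := tendsto_prod_one_add hw1 (z * q)
  have hC := tendsto_prod_one_add hw1 (z⁻¹ * q)
  set M := max ‖z‖ ‖z⁻¹‖ with hMdef
  have hM0 : 0 ≤ M := le_trans (norm_nonneg z) (le_max_left _ _)
  have hbound_sum : Summable fun m : ℤ =>
      (B / (δ * δ)) * (‖q‖ ^ (m.natAbs ^ 2) * M ^ m.natAbs) :=
    summable_bound_int (norm_nonneg q) hqn hM0
  set F : ℕ → ℤ → ℂ := fun n m =>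
    if m ∈ Finset.Icc (-(n:ℤ)) (n:ℤ) then qG w (2 * n) ((m + n).toNat) * q ^ (m ^ 2) * z ^ m
    else 0 with hF
  set g : ℤ → ℂ := fun m => P / (P * P) * (q ^ (m ^ 2) * z ^ m) with hg
  have hmon : ∀ m : ℤ, ‖(q:ℂ) ^ (m ^ 2) * z ^ m‖ ≤ ‖q‖ ^ (m.natAbs ^ 2) * M ^ m.natAbs := by
    intro m
    rw [norm_mul]
    apply mul_le_mul ?_ ?_ (norm_nonneg _) (by positivity)
    · have h1 : (m ^ 2 : ℤ) = ((m.natAbs ^ 2 : ℕ) : ℤ) := by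
        rw [← Int.natAbs_pow]
        exact (Int.natAbs_of_nonneg (sq_nonneg m)).symm
      rw [h1, zpow_natCast, norm_pow]
    · rcases le_or_gt 0 m with hm | hm
      · obtain ⟨a, rfl⟩ : ∃ a : ℕ, m = (a : ℤ) := ⟨m.toNat, by omega⟩
        rw [zpow_natCast, Int.natAbs_natCast, norm_pow]
        exact pow_le_pow_left₀ (norm_nonneg z) (le_max_left _ _) _
      · obtain ⟨a, rfl⟩ : ∃ a : ℕ, m = -(a : ℤ) := ⟨m.natAbs, by omega⟩
        rw [Int.natAbs_neg, Int.natAbs_natCast, zpow_neg, zpow_natCast, norm_inv, norm_pow,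
          ← inv_pow, ← norm_inv]
        exact pow_le_pow_left₀ (norm_nonneg _) (le_max_right _ _) _
  have hdom : ∀ n : ℕ, ∀ m : ℤ,
      ‖F n m‖ ≤ (B / (δ * δ)) * (‖q‖ ^ (m.natAbs ^ 2) * M ^ m.natAbs) := by
    intro n m
    rw [hF]
    dsimp only
    split_ifs with h
    · rw [mul_assoc, norm_mul]
      exact mul_le_mul (hGb _ _) (hmon m) (norm_nonneg _)
        (div_nonneg hB0.le (by positivity))
    · rw [norm_zero]
      positivity
  have hpt : ∀ m : ℤ, Tendsto (fun n => F n m) atTop (𝓝 (g m)) := by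
    intro m
    have hu : Tendsto (fun n : ℕ => ((m + n : ℤ)).toNat) atTop atTop :=
      tendsto_atTop_atTop.mpr fun b => ⟨b + m.natAbs, fun a ha => by omega⟩
    have hv : Tendsto (fun n : ℕ => 2 * n - ((m + n : ℤ)).toNat) atTop atTop :=
      tendsto_atTop_atTop.mpr fun b => ⟨b + m.natAbs, fun a ha => by omega⟩
    have h2n : Tendsto (fun n : ℕ => 2 * n) atTop atTop :=
      tendsto_atTop_atTop.mpr fun b => ⟨b, fun a ha => by omega⟩
    have hlim : Tendsto (fun n : ℕ =>
        qP w (2 * n) / (qP w ((m + n : ℤ)).toNat * qP w (2 * n - ((m + n : ℤ)).toNat)) *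
          (q ^ (m ^ 2) * z ^ m)) atTop (𝓝 (g m)) := by
      rw [hg]
      exact (((hPlim.comp h2n).div ((hPlim.comp hu).mul (hPlim.comp hv))
        (mul_ne_zero hPne hPne)).mul_const _)
    apply hlim.congr'
    filter_upwards [Filter.eventually_ge_atTop m.natAbs] with n hn
    have hmem : m ∈ Finset.Icc (-(n:ℤ)) (n:ℤ) := by
      rw [Finset.mem_Icc]
      omega
    have hk2n : ((m + n : ℤ)).toNat ≤ 2 * n := by omega
    rw [hF]
    dsimp only
    rw [if_pos hmem, qG, if_pos hk2n, mul_assoc]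
  have hT := tendsto_tsum_of_dominated_convergence hbound_sum hpt
    (Filter.Eventually.of_forall hdom)
  have hfin : ∀ n : ℕ, ∑' m : ℤ, F n m =
      (∏ j ∈ Finset.range n, (1 + z * q * w ^ j)) *
      (∏ j ∈ Finset.range n, (1 + z⁻¹ * q * w ^ j)) := by
    intro n
    have h0 : ∀ m ∉ Finset.Icc (-(n:ℤ)) (n:ℤ), F n m = 0 := by
      intro m hm
      simp only [hF]
      exact if_neg hm
    rw [tsum_eq_sum h0]
    have h1 : ∀ m ∈ Finset.Icc (-(n:ℤ)) (n:ℤ),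
        F n m = qG w (2 * n) ((m + n).toNat) * q ^ (m ^ 2) * z ^ m := by
      intro m hm
      simp only [hF]
      exact if_pos hm
    rw [Finset.sum_congr rfl h1, hwdef]
    exact (finiteJTP hq0 hqn hz n).symm
  have hT2 : Tendsto (fun n : ℕ =>
      (∏ j ∈ Finset.range n, (1 + z * q * w ^ j)) *
      (∏ j ∈ Finset.range n, (1 + z⁻¹ * q * w ^ j))) atTop (𝓝 (∑' m : ℤ, g m)) := by
    apply hT.congr
    intro n
    exact hfin n
  have hkey : ∑' m : ℤ, g m =
      (∏' k : ℕ, ((1:ℂ) + z * q * w ^ k)) * (∏' k : ℕ, ((1:ℂ) + z⁻¹ * q * w ^ k)) :=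
    tendsto_nhds_unique hT2 (hA.mul hC)
  rw [hg] at hkey
  rw [tsum_mul_left] at hkey
  have hP1 : (∏' k : ℕ, ((1:ℂ) - w * w ^ k)) = P := by
    rw [hPdef]
    exact tprod_congr fun k => by rw [pow_succ']
  have hS : ∑' m : ℤ, q ^ (m ^ 2) * z ^ m =
      P * ((∏' k : ℕ, ((1:ℂ) + z * q * w ^ k)) * (∏' k : ℕ, ((1:ℂ) + z⁻¹ * q * w ^ k))) := by
    rw [← hkey]
    field_simp
  rw [hP1, hS]
  ring
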